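/- Let F be an A-algebra, let α̃ : Γⁿ_A(F) → Tⁿ_A(F) be the composition of α_n with the inclusion of symmetric tensors, let I ⊆ Tⁿ_A(F) be the extension of the ideal of norms I_F under α̃, and let J ⊆ Tⁿ_A(F) be the ideal of the union of the pairwise diagonals. Then √I = √J. -/

import Mathlib

open scoped TensorProduct

/-- `δ(x,y) ∈ Γⁿ_A(F)`, where `p1` records the external product `γ¹(z 1) * ⋯ * γ¹(z n)`. -/
noncomputable def extDelta {A F Γn : Type*} [CommRing A] [CommRing F] [Algebra A F]
    [CommRing Γn] [Algebra A Γn] {n : ℕ}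
    (p1 : MultilinearMap A (fun _ : Fin n => F) Γn) (x y : Fin n → F) : Γn :=
  ∑ σ : Equiv.Perm (Fin n),
    ((Equiv.Perm.sign σ : ℤ)) • p1 (fun i => x i * y (σ i))

/-- The ideal of norms `I_V ⊆ Γⁿ_A(F)` associated to an `A`-submodule `V ⊆ F`. -/
noncomputable def normIdeal {A F Γn : Type*} [CommRing A] [CommRing F] [Algebra A F]
    [CommRing Γn] [Algebra A Γn] {n : ℕ}
    (p1 : MultilinearMap A (fun _ : Fin n => F) Γn) (V : Submodule A F) : Ideal Γn :=
  Ideal.span {t | ∃ x y : Fin n → F,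
    (∀ i, x i ∈ V) ∧ (∀ i, y i ∈ V) ∧ t = extDelta p1 x y}

/-- `y_{[j]} ∈ Tⁿ_A F`: the elementary tensor with `y` in the `j`-th slot, `1` elsewhere. -/
noncomputable def slot (A : Type*) {F : Type*} [CommRing A] [CommRing F] [Algebra A F]
    {n : ℕ} (y : F) (j : Fin n) : ⨂[A] (_ : Fin n), F :=
  PiTensorProduct.tprod A (fun k => if k = j then y else 1)

namespace Cor45

variable {A F : Type*} [CommRing A] [CommRing F] [Algebra A F] {n : ℕ}

lemma slot_mul (a b : F) (k : Fin n) : slot A a k * slot A b k = slot A (a * b) k := by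
  unfold slot
  rw [PiTensorProduct.tprod_mul_tprod]
  congr 1
  funext j
  by_cases h : j = k <;> simp [h]

lemma slot_one (k : Fin n) : slot A (1 : F) k = 1 := by
  unfold slot
  rw [PiTensorProduct.one_def]
  congr 1
  funext j
  by_cases h : j = k <;> simp [h]

lemma prod_slot (w : Fin n → F) (s : Finset (Fin n)) :
    ∏ k ∈ s, slot A (w k) k
      = PiTensorProduct.tprod A (fun k => if k ∈ s then w k else 1) := by
  classical
  induction s using Finset.induction_on with
  | empty =>
      rw [Finset.prod_empty, PiTensorProduct.one_def]
      congr 1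
  | @insert a s ha ih =>
      rw [Finset.prod_insert ha, ih]
      unfold slot
      rw [PiTensorProduct.tprod_mul_tprod]
      congr 1
      funext j
      by_cases hj : j = a
      · subst hj; simp [ha]
      · simp [hj, Finset.mem_insert]

lemma tprod_eq_prod_slot (w : Fin n → F) :
    PiTensorProduct.tprod A w = ∏ k, slot A (w k) k := by
  rw [prod_slot]
  congr 1
  funext k
  simp

end Cor45

noncomputable def detD (A : Type*) {F : Type*} [CommRing A] [CommRing F] [Algebra A F]
    {n : ℕ} (x : Fin n → F) : ⨂[A] (_ : Fin n), F :=
  ∑ σ : Equiv.Perm (Fin n),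
    ((Equiv.Perm.sign σ : ℤ)) • PiTensorProduct.tprod A (fun i => x (σ i))

namespace Cor45

variable {A F Γn : Type*} [CommRing A] [CommRing F] [Algebra A F]
    [CommRing Γn] [Algebra A Γn] {n : ℕ}

lemma alpha_extDelta (p1 : MultilinearMap A (fun _ : Fin n => F) Γn)
    (α : Γn →ₐ[A] (⨂[A] (_ : Fin n), F))
    (hα : ∀ z : Fin n → F,
      α (p1 z) = ∑ σ : Equiv.Perm (Fin n), PiTensorProduct.tprod A (fun i => z (σ i)))
    (x y : Fin n → F) :
    α (extDelta p1 x y) = detD A x * detD A y := by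
  set g : Equiv.Perm (Fin n) → (⨂[A] (_ : Fin n), F) :=
    fun τ => PiTensorProduct.tprod A (fun i => x (τ i)) with hg
  set h : Equiv.Perm (Fin n) → (⨂[A] (_ : Fin n), F) :=
    fun τ => PiTensorProduct.tprod A (fun i => y (τ i)) with hh
  set c : Equiv.Perm (Fin n) → (⨂[A] (_ : Fin n), F) :=
    fun σ => (((Equiv.Perm.sign σ : ℤ) : ℤ) : ⨂[A] (_ : Fin n), F) with hc
  have hcmul : ∀ σ τ : Equiv.Perm (Fin n), c σ = c τ * c (σ * τ) := by
    intro σ τ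
    have hs : Equiv.Perm.sign (σ * τ) = Equiv.Perm.sign σ * Equiv.Perm.sign τ :=
      Equiv.Perm.sign_mul σ τ
    rcases Int.units_eq_one_or (Equiv.Perm.sign σ) with h1 | h1 <;>
      rcases Int.units_eq_one_or (Equiv.Perm.sign τ) with h2 | h2 <;>
        simp [hc, hs, h1, h2]
  have key : ∀ σ τ : Equiv.Perm (Fin n),
      (PiTensorProduct.tprod A (fun i => x (τ i) * y (σ (τ i))) : ⨂[A] (_ : Fin n), F)
        = g τ * h (σ * τ) := by
    intro σ τ
    rw [hg, hh]
    dsimp only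
    rw [PiTensorProduct.tprod_mul_tprod]
    congr 1
  unfold extDelta detD
  rw [map_sum]
  simp only [zsmul_eq_mul, map_mul, map_intCast, hα]
  calc
    ∑ σ : Equiv.Perm (Fin n), ((Equiv.Perm.sign σ : ℤ) : ⨂[A] (_ : Fin n), F) *
        ∑ τ : Equiv.Perm (Fin n), PiTensorProduct.tprod A (fun i => x (τ i) * y (σ (τ i)))
      = ∑ σ : Equiv.Perm (Fin n), ∑ τ : Equiv.Perm (Fin n), c σ * (g τ * h (σ * τ)) := by
        refine Finset.sum_congr rfl fun σ _ => ?_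
        rw [Finset.mul_sum]
        exact Finset.sum_congr rfl fun τ _ => by rw [key]
    _ = ∑ τ : Equiv.Perm (Fin n), ∑ σ : Equiv.Perm (Fin n), c σ * (g τ * h (σ * τ)) :=
        Finset.sum_comm
    _ = ∑ τ : Equiv.Perm (Fin n), ∑ b : Equiv.Perm (Fin n), (c τ * g τ) * (c b * h b) := by
        refine Finset.sum_congr rfl fun τ _ => ?_
        rw [← Equiv.sum_comp (Equiv.mulRight τ)
          (fun b => (c τ * g τ) * (c b * h b))]
        refine Finset.sum_congr rfl fun σ _ => ?_
        simp only [Equiv.coe_mulRight]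
        rw [hcmul σ τ]
        ring
    _ = (∑ τ : Equiv.Perm (Fin n), c τ * g τ) *
        (∑ b : Equiv.Perm (Fin n), c b * h b) := by rw [Finset.sum_mul_sum]

end Cor45

namespace Cor45

variable {A F : Type*} [CommRing A] [CommRing F] [Algebra A F] {n : ℕ}

lemma detD_mem (x : Fin n → F) {i j : Fin n} (hij : i ≠ j) :
    detD A x ∈ Ideal.span {t : ⨂[A] (_ : Fin n), F | ∃ z : F, t = slot A z i - slot A z j} := by
  classical
  set Jij : Ideal (⨂[A] (_ : Fin n), F) :=
    Ideal.span {t : ⨂[A] (_ : Fin n), F | ∃ z : F, t = slot A z i - slot A z j} with hJ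
  rw [← Ideal.Quotient.eq_zero_iff_mem]
  set q : (⨂[A] (_ : Fin n), F) →+* _ := Ideal.Quotient.mk Jij with hqdef
  have hslot : ∀ z : F, q (slot A z i) = q (slot A z j) := by
    intro z
    rw [← sub_eq_zero, ← map_sub, Ideal.Quotient.eq_zero_iff_mem]
    exact Ideal.subset_span ⟨z, rfl⟩
  set s : Equiv.Perm (Fin n) := Equiv.swap i j with hs
  have hq : ∀ w : Fin n → F,
      q (PiTensorProduct.tprod A w) = q (PiTensorProduct.tprod A (fun k => w (s k))) := by
    intro w
    rw [tprod_eq_prod_slot, tprod_eq_prod_slot, map_prod, map_prod]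
    have h1 : ∀ k : Fin n, q (slot A (w k) (s k)) = q (slot A (w k) k) := by
      intro k
      by_cases hk : k = i
      · subst hk; rw [hs]; rw [Equiv.swap_apply_left]; exact (hslot (w k)).symm
      by_cases hk' : k = j
      · subst hk'; rw [hs]; rw [Equiv.swap_apply_right]; exact hslot (w k)
      · rw [hs, Equiv.swap_apply_of_ne_of_ne hk hk']
    calc ∏ k, q (slot A (w k) k)
        = ∏ k, q (slot A (w k) (s k)) := (Finset.prod_congr rfl fun k _ => (h1 k).symm)
      _ = ∏ k, q (slot A (w (s k)) (s (s k))) := (Equiv.prod_comp s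
          (fun k => q (slot A (w k) (s k)))).symm
      _ = ∏ k, q (slot A (w (s k)) k) := by
          refine Finset.prod_congr rfl fun k _ => ?_
          rw [hs, Equiv.swap_apply_self]
  unfold detD
  rw [map_sum]
  refine Finset.sum_ninvolution (fun σ => σ * s) ?_ ?_ (fun _ => Finset.mem_univ _) ?_
  · intro σ
    have h2 : q (PiTensorProduct.tprod A (fun k => x ((σ * s) k)))
        = q (PiTensorProduct.tprod A (fun k => x (σ k))) := by
      rw [hq (fun k => x (σ k))]
      rfl
    have h3 : (Equiv.Perm.sign (σ * s) : ℤ) = -(Equiv.Perm.sign σ : ℤ) := by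
      rw [Equiv.Perm.sign_mul, hs, Equiv.Perm.sign_swap hij]
      push_cast
      ring
    rw [map_zsmul, map_zsmul, h2, h3, neg_smul]
    exact add_neg_cancel _
  · intro σ _
    intro heq
    have hs1 : s = 1 := mul_eq_left.mp heq
    have h4 : s i = (1 : Equiv.Perm (Fin n)) i := by rw [hs1]
    rw [hs, Equiv.swap_apply_left, Equiv.Perm.one_apply] at h4
    exact hij h4.symm
  · intro σ
    show σ * s * s = σ
    rw [mul_assoc, hs, Equiv.swap_mul_self, mul_one]

end Cor45

namespace Cor45

open Matrix

lemma exists_det_ne_zero {K G : Type*} [Field K] {n : ℕ}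
    (v : Fin n → (G → K)) (hv : LinearIndependent K v) :
    ∃ x : Fin n → G, (Matrix.of fun i k => v k (x i)).det ≠ 0 := by
  classical
  set e : G → (Fin n → K) := fun a k => v k a with he
  have hspan : Submodule.span K (Set.range e) = ⊤ := by
    by_contra hne
    obtain ⟨f, hf0, hfbot⟩ := Submodule.exists_dual_map_eq_bot_of_lt_top
      (lt_top_iff_ne_top.mpr hne) inferInstance
    set c : Fin n → K := fun k => f (Pi.single k 1) with hcdef
    have hfy : ∀ y : Fin n → K, f y = ∑ k, y k * c k := by
      intro y
      have hy : y = ∑ k, y k • (Pi.single k (1 : K) : Fin n → K) := by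
        ext m
        simp [Pi.single_apply]
      conv_lhs => rw [hy]
      rw [map_sum]
      simp only [_root_.map_smul, smul_eq_mul, hcdef]
    have hfe : ∀ a : G, f (e a) = 0 := by
      intro a
      have : f (e a) ∈ Submodule.map f (Submodule.span K (Set.range e)) :=
        Submodule.mem_map_of_mem (Submodule.subset_span ⟨a, rfl⟩)
      rw [hfbot] at this
      exact (Submodule.mem_bot K).mp this
    have hc0 : c = 0 := by
      have hrel : ∑ k, c k • v k = 0 := by
        funext a
        have := hfe a
        rw [hfy (e a)] at this
        simpa [he, Finset.sum_apply, mul_comm] using this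
      have := Fintype.linearIndependent_iff.mp hv c hrel
      funext k
      exact this k
    apply hf0
    apply LinearMap.ext
    intro y
    rw [hfy y, hc0]
    simp
  obtain ⟨b, hbsub, hbspan, hbli⟩ := exists_linearIndependent K (Set.range e)
  rw [hspan] at hbspan
  have hfin : b.Finite := hbli.setFinite
  have : Fintype b := hfin.fintype
  set B0 : Module.Basis b K (Fin n → K) := Module.Basis.mk hbli (by rw [Subtype.range_coe, hbspan]) with hB0
  set eqv : b ≃ Fin n := B0.indexEquiv (Pi.basisFun K (Fin n)) with heqv
  set B : Module.Basis (Fin n) K (Fin n → K) := B0.reindex eqv with hB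
  have hBmem : ∀ i : Fin n, ∃ a : G, e a = B i := by
    intro i
    have : (B i : Fin n → K) ∈ b := by
      rw [hB, Module.Basis.reindex_apply, hB0, Module.Basis.mk_apply]
      exact Subtype.mem _
    obtain ⟨a, ha⟩ := hbsub this
    exact ⟨a, ha⟩
  choose x hx using hBmem
  refine ⟨x, ?_⟩
  have hM : (Matrix.of fun i k => v k (x i)) = ((Pi.basisFun K (Fin n)).toMatrix B)ᵀ := by
    ext i k
    simp only [Matrix.transpose_apply, Matrix.of_apply, Module.Basis.toMatrix_apply,
      Pi.basisFun_repr]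
    rw [← hx i]
  rw [hM, Matrix.det_transpose]
  have : Invertible ((Pi.basisFun K (Fin n)).toMatrix B) :=
    (Pi.basisFun K (Fin n)).invertibleToMatrix B
  exact (Matrix.isUnit_det_of_invertible _).ne_zero

end Cor45

namespace Cor45

variable {A F : Type*} [CommRing A] [CommRing F] [Algebra A F] {n : ℕ}

/-- `slot` as a monoid hom in its first argument. -/
noncomputable def slotHom (A : Type*) {F : Type*} [CommRing A] [CommRing F] [Algebra A F]
    {n : ℕ} (k : Fin n) : F →* ⨂[A] (_ : Fin n), F where
  toFun z := slot A z k
  map_one' := slot_one k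
  map_mul' a b := (slot_mul a b k).symm

lemma psi_detD {K : Type*} [CommRing K] (ψ : (⨂[A] (_ : Fin n), F) →+* K) (x : Fin n → F) :
    ψ (detD A x) = (Matrix.of fun i k => ψ (slot A (x i) k)).det := by
  unfold detD
  rw [map_sum, Matrix.det_apply']
  refine Finset.sum_congr rfl fun σ _ => ?_
  rw [map_zsmul, zsmul_eq_mul]
  congr 1
  rw [tprod_eq_prod_slot, map_prod]
  rfl

set_option synthInstance.maxHeartbeats 400000 in
set_option maxHeartbeats 1000000 in
lemma exists_pair (P : Ideal (⨂[A] (_ : Fin n), F)) [hP : P.IsPrime]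
    (hdet : ∀ x : Fin n → F, detD A x ∈ P) :
    ∃ i j : Fin n, i ≠ j ∧ ∀ z : F, slot A z i - slot A z j ∈ P := by
  classical
  set Q := (⨂[A] (_ : Fin n), F) ⧸ P with hQ
  letI : IsDomain Q := Ideal.Quotient.isDomain P
  set K := FractionRing Q with hK
  set ψ : (⨂[A] (_ : Fin n), F) →+* K := (algebraMap Q K).comp (Ideal.Quotient.mk P) with hψ
  have hker : ∀ t : ⨂[A] (_ : Fin n), F, ψ t = 0 ↔ t ∈ P := by
    intro t
    constructor
    · intro h
      have h2 : Ideal.Quotient.mk P t = 0 := by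
        apply IsFractionRing.injective Q K
        simpa [hψ] using h
      rwa [Ideal.Quotient.eq_zero_iff_mem] at h2
    · intro h
      show (algebraMap Q K) (Ideal.Quotient.mk P t) = 0
      rw [(Ideal.Quotient.eq_zero_iff_mem).mpr h, map_zero]
  by_contra hcon
  push_neg at hcon
  set φ : Fin n → (F →* K) := fun k => ψ.toMonoidHom.comp (slotHom A k) with hφ
  have hinj : Function.Injective φ := by
    intro i j heq
    by_contra hne
    obtain ⟨z, hz⟩ := hcon i j hne
    apply hz
    rw [← hker, map_sub]
    have h3 : (φ i) z = (φ j) z := by rw [heq]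
    have h4 : ψ (slot A z i) = ψ (slot A z j) := h3
    rw [h4, sub_self]
  have hli : LinearIndependent K (fun k => ((φ k : F → K))) :=
    (linearIndependent_monoidHom F K).comp φ hinj
  obtain ⟨x, hx⟩ := exists_det_ne_zero (fun k => ((φ k : F → K))) hli
  apply hx
  have h0 : ψ (detD A x) = 0 := (hker _).mpr (hdet x)
  rw [psi_detD ψ x] at h0
  exact h0

end Cor45

/-- **Corollary 4.5.**  Setup: `α : Γⁿ_A(F) → Tⁿ_A(F)` is `α̃`, the canonical map into
symmetric tensors composed with the inclusion into the tensor power, determined on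
external products of degree-one divided powers by the shuffle formula `hα`.  Let
`I ⊆ Tⁿ_A(F)` be the extension of the ideal of norms `I_F` along `α̃`, and let `J` be the
ideal of the union of the pairwise diagonals, i.e. the intersection over all pairs
`i ≠ j` of the ideals generated by the differences `x_{[i]} - x_{[j]}`, `x ∈ F`.

Conclusion: `√I = √J`. -/
theorem radical_norm_eq_radical_diagonal {A F Γn : Type*} [CommRing A] [CommRing F]
    [Algebra A F] [CommRing Γn] [Algebra A Γn] {n : ℕ}
    (p1 : MultilinearMap A (fun _ : Fin n => F) Γn)
    (α : Γn →ₐ[A] (⨂[A] (_ : Fin n), F))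
    (hα : ∀ z : Fin n → F,
      α (p1 z) = ∑ σ : Equiv.Perm (Fin n), PiTensorProduct.tprod A (fun i => z (σ i))) :
    (Ideal.map α.toRingHom (normIdeal p1 (⊤ : Submodule A F))).radical =
      (⨅ (i : Fin n) (j : Fin n) (_ : i ≠ j),
        Ideal.span {t | ∃ z : F, t = slot A z i - slot A z j}).radical := by
  classical
  apply le_antisymm
  · apply Ideal.radical_mono
    unfold normIdeal
    rw [Ideal.map_span, Ideal.span_le]
    rintro t ⟨u, ⟨x, y, -, -, rfl⟩, rfl⟩
    have heq : α.toRingHom (extDelta p1 x y) = detD A x * detD A y :=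
      Cor45.alpha_extDelta p1 α hα x y
    rw [SetLike.mem_coe, Submodule.mem_iInf]
    intro i
    rw [Submodule.mem_iInf]
    intro j
    rw [Submodule.mem_iInf]
    intro hij
    rw [heq]
    exact Ideal.mul_mem_right _ _ (Cor45.detD_mem x hij)
  · have hJI : (⨅ (i : Fin n) (j : Fin n) (_ : i ≠ j),
        Ideal.span {t | ∃ z : F, t = slot A z i - slot A z j})
          ≤ (Ideal.map α.toRingHom (normIdeal p1 (⊤ : Submodule A F))).radical := by
      rw [Ideal.radical_eq_sInf]
      refine le_sInf ?_
      rintro P ⟨hIP, hPprime⟩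
      haveI := hPprime
      have hdet : ∀ x : Fin n → F, detD A x ∈ P := by
        intro x
        have hsq : detD A x * detD A x ∈ P := by
          apply hIP
          have hmem : extDelta p1 x x ∈ normIdeal p1 (⊤ : Submodule A F) :=
            Ideal.subset_span ⟨x, x, fun _ => trivial, fun _ => trivial, rfl⟩
          have h5 := Ideal.mem_map_of_mem α.toRingHom hmem
          have h6 : α.toRingHom (extDelta p1 x x) = detD A x * detD A x :=
            Cor45.alpha_extDelta p1 α hα x x
          rwa [h6] at h5
        rcases hPprime.mem_or_mem hsq with h | h <;> exact h
      obtain ⟨i, j, hij, hz⟩ := Cor45.exists_pair P hdet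
      refine le_trans (iInf_le _ i) (le_trans (iInf_le _ j) (le_trans (iInf_le _ hij) ?_))
      rw [Ideal.span_le]
      rintro t ⟨z, rfl⟩
      exact hz z
    calc (⨅ (i : Fin n) (j : Fin n) (_ : i ≠ j),
          Ideal.span {t | ∃ z : F, t = slot A z i - slot A z j}).radical
        ≤ ((Ideal.map α.toRingHom (normIdeal p1 (⊤ : Submodule A F))).radical).radical :=
          Ideal.radical_mono hJI
      _ = (Ideal.map α.toRingHom (normIdeal p1 (⊤ : Submodule A F))).radical :=
          (Ideal.map α.toRingHom (normIdeal p1 (⊤ : Submodule A F))).radical_idem
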